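/- Let k, c ∈ ℝ, η ∈ ℝ, ν ∈ (0, 1), and ξ ∈ ℝ. Then (iξ − ν) ≠ 0 and 1 − (iξ − ν)² ≠ 0 in ℂ, and the real part of λ(ξ) := (iξ − ν) · (1 − (iξ − ν)²)^{−1} · (c − 3k − (c − k)(iξ − ν)² + η²(iξ − ν)^{−2}) equals λ_r(ξ) − η²ν(1 − ν² + 3ξ²)/((ξ² + ν²)((1 − ν² + ξ²)² + 4ξ²ν²)), where λ_r(ξ) := −ν(c − k) − 2kν(ν² + ξ² − 1)/((1 − ν² + ξ²)² + 4ξ²ν²). -/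

import Mathlib

/-- The real part of the Fourier symbol of the transversely perturbed linearized
Camassa–Holm operator `J(L₀ + η² ∂ₓ⁻²)` in the weighted space `L²_ν`. -/
theorem perturbed_symbol_real_part (k c η ν : ℝ) (hν : ν ∈ Set.Ioo (0 : ℝ) 1) (ξ : ℝ) :
    (Complex.I * (ξ : ℂ) - (ν : ℂ)) ≠ 0 ∧
    (1 - (Complex.I * (ξ : ℂ) - (ν : ℂ)) ^ 2) ≠ 0 ∧
    ((Complex.I * (ξ : ℂ) - (ν : ℂ)) * (1 - (Complex.I * (ξ : ℂ) - (ν : ℂ)) ^ 2)⁻¹ *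
        ((c : ℂ) - 3 * (k : ℂ) - ((c : ℂ) - (k : ℂ)) * (Complex.I * (ξ : ℂ) - (ν : ℂ)) ^ 2 +
          (η : ℂ) ^ 2 * ((Complex.I * (ξ : ℂ) - (ν : ℂ)) ^ 2)⁻¹)).re =
      (-ν * (c - k) - 2 * k * ν * (ν ^ 2 + ξ ^ 2 - 1) /
          ((1 - ν ^ 2 + ξ ^ 2) ^ 2 + 4 * ξ ^ 2 * ν ^ 2)) -
        η ^ 2 * ν * (1 - ν ^ 2 + 3 * ξ ^ 2) /
          ((ξ ^ 2 + ν ^ 2) * ((1 - ν ^ 2 + ξ ^ 2) ^ 2 + 4 * ξ ^ 2 * ν ^ 2)) := by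
  obtain ⟨hν0, hν1⟩ := hν
  set z : ℂ := Complex.I * (ξ : ℂ) - (ν : ℂ) with hzdef
  have hzre : z.re = -ν := by simp [hzdef]
  have hzim : z.im = ξ := by simp [hzdef]
  have hz : z ≠ 0 := by
    intro h
    have := congrArg Complex.re h
    rw [hzre] at this
    simp at this
    linarith
  have h2re : (1 - z ^ 2).re = 1 - ν ^ 2 + ξ ^ 2 := by
    simp [Complex.sub_re, pow_two, Complex.mul_re, hzre, hzim]
    ring
  have h2 : (1 - z ^ 2) ≠ 0 := by
    intro h
    have := congrArg Complex.re h
    rw [h2re] at this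
    simp at this
    nlinarith [sq_nonneg ξ]
  refine ⟨hz, h2, ?_⟩
  have hz2 : z ^ 2 ≠ 0 := pow_ne_zero _ hz
  have key : (z * (1 - z ^ 2)⁻¹ *
      ((c : ℂ) - 3 * (k : ℂ) - ((c : ℂ) - (k : ℂ)) * z ^ 2 + (η : ℂ) ^ 2 * (z ^ 2)⁻¹)) =
      (z * (((c : ℂ) - 3 * (k : ℂ) - ((c : ℂ) - (k : ℂ)) * z ^ 2) * z ^ 2 + (η : ℂ) ^ 2)) /
        ((1 - z ^ 2) * z ^ 2) := by
    field_simp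
  rw [key, Complex.div_re, Complex.normSq_apply]
  have hDre : ((1 - z ^ 2) * z ^ 2).re =
      (1 - (ν ^ 2 - ξ ^ 2)) * (ν ^ 2 - ξ ^ 2) + (2 * ν * ξ) ^ 2 := by
    simp [pow_two, Complex.mul_re, Complex.mul_im, Complex.sub_re, Complex.sub_im,
      hzre, hzim]
    ring
  have hDim : ((1 - z ^ 2) * z ^ 2).im =
      (-2 * ν * ξ) - 2 * (ν ^ 2 - ξ ^ 2) * (-2 * ν * ξ) := by
    simp [pow_two, Complex.mul_re, Complex.mul_im, Complex.sub_re, Complex.sub_im,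
      hzre, hzim]
    ring
  have hNre : (z * (((c : ℂ) - 3 * (k : ℂ) - ((c : ℂ) - (k : ℂ)) * z ^ 2) * z ^ 2 +
      (η : ℂ) ^ 2)).re =
      -ν * ((c - 3 * k - (c - k) * (ν ^ 2 - ξ ^ 2)) * (ν ^ 2 - ξ ^ 2) -
          (-(c - k) * (-2 * ν * ξ)) * (-2 * ν * ξ) + η ^ 2) -
        ξ * ((c - 3 * k - (c - k) * (ν ^ 2 - ξ ^ 2)) * (-2 * ν * ξ) +
          (-(c - k) * (-2 * ν * ξ)) * (ν ^ 2 - ξ ^ 2)) := by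
    simp [pow_two, Complex.mul_re, Complex.mul_im, Complex.sub_re, Complex.sub_im,
      Complex.add_re, Complex.add_im, hzre, hzim]
    ring
  have hNim : (z * (((c : ℂ) - 3 * (k : ℂ) - ((c : ℂ) - (k : ℂ)) * z ^ 2) * z ^ 2 +
      (η : ℂ) ^ 2)).im =
      -ν * ((c - 3 * k - (c - k) * (ν ^ 2 - ξ ^ 2)) * (-2 * ν * ξ) +
          (-(c - k) * (-2 * ν * ξ)) * (ν ^ 2 - ξ ^ 2)) +
        ξ * ((c - 3 * k - (c - k) * (ν ^ 2 - ξ ^ 2)) * (ν ^ 2 - ξ ^ 2) -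
          (-(c - k) * (-2 * ν * ξ)) * (-2 * ν * ξ) + η ^ 2) := by
    simp [pow_two, Complex.mul_re, Complex.mul_im, Complex.sub_re, Complex.sub_im,
      Complex.add_re, Complex.add_im, hzre, hzim]
    ring
  rw [hDre, hDim, hNre, hNim]
  have h1pos : (0 : ℝ) < (1 - ν ^ 2 + ξ ^ 2) ^ 2 + 4 * ξ ^ 2 * ν ^ 2 := by
    have : (0 : ℝ) < 1 - ν ^ 2 + ξ ^ 2 := by nlinarith [sq_nonneg ξ]
    nlinarith [sq_nonneg (ξ * ν)]
  have h2pos : (0 : ℝ) < ξ ^ 2 + ν ^ 2 := by nlinarith [sq_nonneg ξ]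
  have hns : ((1 - (ν ^ 2 - ξ ^ 2)) * (ν ^ 2 - ξ ^ 2) + (2 * ν * ξ) ^ 2) *
        ((1 - (ν ^ 2 - ξ ^ 2)) * (ν ^ 2 - ξ ^ 2) + (2 * ν * ξ) ^ 2) +
      ((-2 * ν * ξ) - 2 * (ν ^ 2 - ξ ^ 2) * (-2 * ν * ξ)) *
        ((-2 * ν * ξ) - 2 * (ν ^ 2 - ξ ^ 2) * (-2 * ν * ξ)) =
      ((1 - ν ^ 2 + ξ ^ 2) ^ 2 + 4 * ξ ^ 2 * ν ^ 2) * (ξ ^ 2 + ν ^ 2) ^ 2 := by ring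
  rw [hns]
  have h1ne : (1 - ν ^ 2 + ξ ^ 2) ^ 2 + ν ^ 2 * ξ ^ 2 * 4 ≠ 0 := by
    rw [show ν ^ 2 * ξ ^ 2 * 4 = 4 * ξ ^ 2 * ν ^ 2 by ring]; exact h1pos.ne'
  have h2ne := h2pos.ne'
  field_simp
  ring
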